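/- arXiv:2101.12399 — 5 statements merged into one kernel-verified Lean document; each statement's English description precedes it below -/
import Mathlib

section
/- Let V be a real inner product space with inner product h, and let V, W be vectors with ‖V‖ < 1. Define λ = 1 - ‖V‖². Then the condition √(λ‖W‖² + ⟨V,W⟩²) + ⟨V,W⟩ < λ holds if and only if ‖V + W‖² < 1. -/
/-- Zermelo condition F(-W) < 1 is equivalent to ‖V + W‖² < 1. -/
theorem stmt_0 {E : Type*} [NormedAddCommGroup E] [InnerProductSpace ℝ E]
    (V W : E) (hV : ‖V‖ < 1) :
    Real.sqrt ((1 - ‖V‖ ^ 2) * ‖W‖ ^ 2 + (inner ℝ V W : ℝ) ^ 2) + (inner ℝ V W : ℝ)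
      < 1 - ‖V‖ ^ 2 ↔ ‖V + W‖ ^ 2 < 1 := by
  set s := (inner ℝ V W : ℝ) with hs
  have hl : (0:ℝ) < 1 - ‖V‖^2 := by nlinarith [norm_nonneg V]
  have hw : (0:ℝ) ≤ ‖W‖^2 := by positivity
  have key : ‖V + W‖^2 = ‖V‖^2 + 2*s + ‖W‖^2 := by
    rw [norm_add_sq_real]
  have hX : (0:ℝ) ≤ (1-‖V‖^2)*‖W‖^2 + s^2 := by positivity
  have hsqrt := Real.sq_sqrt hX
  have hnn := Real.sqrt_nonneg ((1-‖V‖^2)*‖W‖^2 + s^2)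
  constructor
  · intro h
    nlinarith [hsqrt, hnn]
  · intro h
    have h2 : 2*s + ‖W‖^2 < 1 - ‖V‖^2 := by nlinarith
    have hls : 0 < 1 - ‖V‖^2 - s := by nlinarith
    have hlt : Real.sqrt ((1-‖V‖^2)*‖W‖^2+s^2) < 1-‖V‖^2 - s := by
      rw [show (1-‖V‖^2-s) = Real.sqrt ((1-‖V‖^2-s)^2) from (Real.sqrt_sq hls.le).symm]
      apply Real.sqrt_lt_sqrt hX
      nlinarith
    linarith
end

section
/- Let F₁ = α + β be a Randers norm on ℝⁿ (α Riemannian norm from positive definite form a, β linear with |β(v)| < α(v) for v ≠ 0), and W a vector with F₁(-W) < 1. Define η = (1+β(W))² - α(W)² and the symmetric bilinear form ã with ã_{ij} = (a_{ij} - b_i b_j)/η + ((W_i^{(a)} - b_i(1+β(W)))/η)((W_j^{(a)} - b_j(1+β(W)))/η), where W_i^{(a)} = a_{ij}W^j. Then ã is positive definite. -/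
open scoped Matrix

lemma aux_sum_split {ι : Type*} (s : Finset ι) (A : ι → ι → ℝ) (b c v : ι → ℝ) (η : ℝ)
    (hη : η ≠ 0) :
    ∑ i ∈ s, v i * ∑ j ∈ s, (((A i j - b i * b j) / η + (c i / η) * (c j / η)) * v j)
    = ((∑ i ∈ s, v i * ∑ j ∈ s, A i j * v j) - (∑ i ∈ s, b i * v i) ^ 2) / η
      + ((∑ i ∈ s, c i * v i) / η) ^ 2 := by
  rw [pow_two, pow_two, Finset.sum_mul_sum, div_mul_div_comm, Finset.sum_mul_sum,
    sub_div]
  simp only [Finset.sum_div]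
  rw [← Finset.sum_sub_distrib, ← Finset.sum_add_distrib]
  refine Finset.sum_congr rfl fun i _ => ?_
  rw [Finset.mul_sum, Finset.mul_sum]
  simp only [Finset.sum_div]
  rw [← Finset.sum_sub_distrib, ← Finset.sum_add_distrib]
  refine Finset.sum_congr rfl fun j _ => ?_
  field_simp

/-- The bilinear form ã of the Zermelo solution with Randers data (α+β, W) is positive
definite. -/
theorem stmt_3 {n : ℕ} (a : Matrix (Fin n) (Fin n) ℝ) (ha : a.PosDef) (hsym : a.IsSymm)
    (b W : Fin n → ℝ)
    (hRanders : ∀ v : Fin n → ℝ, v ≠ 0 → |b ⬝ᵥ v| < Real.sqrt (v ⬝ᵥ a.mulVec v))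
    (hW : Real.sqrt (W ⬝ᵥ a.mulVec W) - b ⬝ᵥ W < 1)
    (η : ℝ) (hη : η = (1 + b ⬝ᵥ W) ^ 2 - W ⬝ᵥ a.mulVec W)
    (atil : Matrix (Fin n) (Fin n) ℝ)
    (hatil : ∀ i j, atil i j = (a i j - b i * b j) / η +
        ((a.mulVec W i - b i * (1 + b ⬝ᵥ W)) / η) *
        ((a.mulVec W j - b j * (1 + b ⬝ᵥ W)) / η)) :
    ∀ v : Fin n → ℝ, v ≠ 0 → 0 < v ⬝ᵥ atil.mulVec v := by
  have hα : ∀ u : Fin n → ℝ, u ≠ 0 → (b ⬝ᵥ u) ^ 2 < u ⬝ᵥ a.mulVec u := by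
    intro u hu
    have h1 := hRanders u hu
    have h2 : 0 ≤ u ⬝ᵥ a.mulVec u := le_of_lt (ha.dotProduct_mulVec_pos hu)
    calc (b ⬝ᵥ u) ^ 2 = |b ⬝ᵥ u| ^ 2 := (sq_abs _).symm
    _ < Real.sqrt (u ⬝ᵥ a.mulVec u) ^ 2 := by
        exact pow_lt_pow_left₀ h1 (abs_nonneg _) (by norm_num)
    _ = u ⬝ᵥ a.mulVec u := Real.sq_sqrt h2
  have hηpos : 0 < η := by
    rcases eq_or_ne W 0 with h | h
    · subst h
      simp [hη, Matrix.mulVec_zero]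
    · have hβ : |b ⬝ᵥ W| < Real.sqrt (W ⬝ᵥ a.mulVec W) := hRanders W h
      have hs : Real.sqrt (W ⬝ᵥ a.mulVec W) ^ 2 = W ⬝ᵥ a.mulVec W :=
        Real.sq_sqrt (le_of_lt (ha.dotProduct_mulVec_pos h))
      have h1 : 0 < 1 + b ⬝ᵥ W - Real.sqrt (W ⬝ᵥ a.mulVec W) := by linarith
      have h2 : 0 < 1 + b ⬝ᵥ W + Real.sqrt (W ⬝ᵥ a.mulVec W) := by
        have := (abs_lt.1 hβ).1
        linarith
      nlinarith [mul_pos h1 h2]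
  intro v hv
  set c : Fin n → ℝ := fun i => a.mulVec W i - b i * (1 + b ⬝ᵥ W) with hc
  have key : v ⬝ᵥ atil.mulVec v =
      (v ⬝ᵥ a.mulVec v - (b ⬝ᵥ v) ^ 2) / η + ((c ⬝ᵥ v) / η) ^ 2 := by
    calc v ⬝ᵥ atil.mulVec v
        = ∑ i, v i * ∑ j, (((a i j - b i * b j) / η + (c i / η) * (c j / η)) * v j) := by
          simp only [dotProduct, Matrix.mulVec, hatil, hc]
      _ = _ := aux_sum_split Finset.univ (fun i j => a i j) b c v η (ne_of_gt hηpos)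
  rw [key]
  have h1 : 0 < (v ⬝ᵥ a.mulVec v - (b ⬝ᵥ v) ^ 2) / η :=
    div_pos (by linarith [hα v hv]) hηpos
  nlinarith [sq_nonneg ((c ⬝ᵥ v) / η)]
end

section
/- Let h be a positive definite symmetric bilinear form on ℝⁿ and W a vector with ‖W‖_h < 1. Define λ = 1 - ‖W‖²_h, a_{ij} = h_{ij}/λ + (W_i/λ)(W_j/λ) with W_i = h_{ij}W^j, and b_i = -W_i/λ. Then for every y ∈ ℝⁿ, the value F(y) = √(a_{ij}y^i y^j) + b_i y^i satisfies the Zermelo navigation equation ‖y - F(y)·W‖_h = F(y) whenever y ≠ 0. -/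
/-- The Randers norm F = α + β from the Zermelo navigation data (h, W)
satisfies the navigation equation ‖y - F(y)·W‖ = F(y). -/
theorem stmt_5 {E : Type*} [NormedAddCommGroup E] [InnerProductSpace ℝ E]
    (W : E) (hW : ‖W‖ < 1) (lam : ℝ) (hlam : lam = 1 - ‖W‖ ^ 2)
    (F : E → ℝ)
    (hF : ∀ y : E, F y =
      Real.sqrt (‖y‖ ^ 2 / lam + ((inner ℝ W y : ℝ) / lam) ^ 2) - (inner ℝ W y : ℝ) / lam) :
    ∀ y : E, y ≠ 0 → ‖y - F y • W‖ = F y := by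
  intro y hy
  have hlam_pos : 0 < lam := by
    rw [hlam]
    nlinarith [norm_nonneg W]
  have hl : lam ≠ 0 := ne_of_gt hlam_pos
  set s : ℝ := (inner ℝ W y : ℝ) with hs
  set A : ℝ := ‖y‖ ^ 2 / lam + (s / lam) ^ 2 with hA
  have hA_nonneg : 0 ≤ A := by rw [hA]; positivity
  have hsqrtA : Real.sqrt A ^ 2 = A := Real.sq_sqrt hA_nonneg
  set f : ℝ := F y with hf
  have hfeq : f = Real.sqrt A - s / lam := hF y
  -- f ≥ 0
  have hge : |s / lam| ≤ Real.sqrt A := by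
    rw [← Real.sqrt_sq_eq_abs]
    apply Real.sqrt_le_sqrt
    have : 0 ≤ ‖y‖ ^ 2 / lam := by positivity
    linarith
  have hf_nonneg : 0 ≤ f := by
    rw [hfeq]
    have h1 := le_abs_self (s / lam)
    linarith
  -- key identity: f^2 * lam + 2 * f * s = ‖y‖^2
  have hfl : f * lam + s = Real.sqrt A * lam := by
    rw [hfeq]; field_simp; ring
  have hAl : A * lam ^ 2 = ‖y‖ ^ 2 * lam + s ^ 2 := by
    rw [hA]; field_simp
  have h2 : (f * lam + s) ^ 2 = ‖y‖ ^ 2 * lam + s ^ 2 := by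
    rw [hfl, mul_pow, hsqrtA, hAl]
  have h3 : (f ^ 2 * lam + 2 * f * s) * lam = ‖y‖ ^ 2 * lam := by
    linear_combination h2
  have hkey : f ^ 2 * lam + 2 * f * s = ‖y‖ ^ 2 := mul_right_cancel₀ hl h3
  -- compute the norm squared
  have hnorm2 : ‖y - f • W‖ ^ 2 = f ^ 2 := by
    rw [norm_sub_sq_real]
    have hiw : (inner ℝ y (f • W) : ℝ) = f * s := by
      rw [real_inner_smul_right, real_inner_comm]
    rw [hiw, norm_smul, mul_pow, Real.norm_eq_abs, sq_abs]
    have hlam' : ‖W‖ ^ 2 = 1 - lam := by rw [hlam]; ring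
    rw [hlam']
    linear_combination -hkey
  calc ‖y - f • W‖ = Real.sqrt (‖y - f • W‖ ^ 2) := by
        rw [Real.sqrt_sq (norm_nonneg _)]
    _ = Real.sqrt (f ^ 2) := by rw [hnorm2]
    _ = f := Real.sqrt_sq hf_nonneg
end

section
/- Two-step Zermelo navigation equals one-step: let h be a positive definite inner product on ℝⁿ and V, W vectors with ‖V+W‖_h < 1. Let F₁ be the Randers norm solving Zermelo navigation for (h, V) (assuming ‖V‖_h < 1), and F̃ the norm solving F₁(y - F̃·W) = F̃ (assuming F₁(-W) < 1). Then F̃ equals the Randers norm solving Zermelo navigation for (h, V+W). -/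
open scoped RealInnerProductSpace

/-- The Randers norm solving the Zermelo navigation problem for data (h, U), ‖U‖ < 1. -/
noncomputable def zermeloSol {E : Type*} [NormedAddCommGroup E] [InnerProductSpace ℝ E]
    (U y : E) : ℝ :=
  (Real.sqrt ((1 - ‖U‖ ^ 2) * ‖y‖ ^ 2 + (inner ℝ U y : ℝ) ^ 2) - (inner ℝ U y : ℝ)) /
    (1 - ‖U‖ ^ 2)

lemma norm_sub_smul_sq {E : Type*} [NormedAddCommGroup E] [InnerProductSpace ℝ E]
    (U y : E) (t : ℝ) :
    ‖y - t • U‖ ^ 2 = ‖y‖ ^ 2 - 2 * (inner ℝ U y : ℝ) * t + t ^ 2 * ‖U‖ ^ 2 := by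
  rw [norm_sub_sq_real, real_inner_smul_right, norm_smul, real_inner_comm]
  simp [mul_pow, sq_abs]
  ring

lemma zermelo_nonneg {E : Type*} [NormedAddCommGroup E] [InnerProductSpace ℝ E]
    (U y : E) (hU : ‖U‖ < 1) : 0 ≤ zermeloSol U y := by
  have hl : 0 < 1 - ‖U‖ ^ 2 := by nlinarith [norm_nonneg U]
  have h1 : |(inner ℝ U y : ℝ)| ≤ Real.sqrt ((1 - ‖U‖ ^ 2) * ‖y‖ ^ 2 + (inner ℝ U y : ℝ) ^ 2) := by
    rw [← Real.sqrt_sq_eq_abs]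
    exact Real.sqrt_le_sqrt (by nlinarith [sq_nonneg ‖y‖])
  have h2 : (inner ℝ U y : ℝ) ≤ Real.sqrt ((1 - ‖U‖ ^ 2) * ‖y‖ ^ 2 + (inner ℝ U y : ℝ) ^ 2) :=
    le_trans (le_abs_self _) h1
  unfold zermeloSol
  exact div_nonneg (by linarith) hl.le

lemma zermelo_pos {E : Type*} [NormedAddCommGroup E] [InnerProductSpace ℝ E]
    (U y : E) (hU : ‖U‖ < 1) (hy : y ≠ 0) : 0 < zermeloSol U y := by
  have hl : 0 < 1 - ‖U‖ ^ 2 := by nlinarith [norm_nonneg U]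
  have hy' : 0 < ‖y‖ ^ 2 := pow_pos (norm_pos_iff.mpr hy) 2
  have h1 : |(inner ℝ U y : ℝ)| < Real.sqrt ((1 - ‖U‖ ^ 2) * ‖y‖ ^ 2 + (inner ℝ U y : ℝ) ^ 2) := by
    rw [← Real.sqrt_sq_eq_abs]
    apply Real.sqrt_lt_sqrt (sq_nonneg _)
    nlinarith
  have h2 : (inner ℝ U y : ℝ) < Real.sqrt ((1 - ‖U‖ ^ 2) * ‖y‖ ^ 2 + (inner ℝ U y : ℝ) ^ 2) :=
    lt_of_le_of_lt (le_abs_self _) h1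
  unfold zermeloSol
  exact div_pos (by linarith) hl

lemma zermelo_spec {E : Type*} [NormedAddCommGroup E] [InnerProductSpace ℝ E]
    (U y : E) (hU : ‖U‖ < 1) : ‖y - zermeloSol U y • U‖ = zermeloSol U y := by
  have hl : 0 < 1 - ‖U‖ ^ 2 := by nlinarith [norm_nonneg U]
  set c : ℝ := (inner ℝ U y : ℝ) with hc
  set s : ℝ := Real.sqrt ((1 - ‖U‖ ^ 2) * ‖y‖ ^ 2 + c ^ 2) with hs
  have hs2 : s ^ 2 = (1 - ‖U‖ ^ 2) * ‖y‖ ^ 2 + c ^ 2 :=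
    Real.sq_sqrt (by nlinarith [sq_nonneg ‖y‖, sq_nonneg c])
  set F : ℝ := zermeloSol U y with hF
  have hFnn : 0 ≤ F := zermelo_nonneg U y hU
  have hFl : F * (1 - ‖U‖ ^ 2) = s - c := by
    rw [hF]; unfold zermeloSol; rw [← hc, ← hs]; field_simp
  have hquad : ‖y‖ ^ 2 = (1 - ‖U‖ ^ 2) * F ^ 2 + 2 * c * F := by
    have key : (1 - ‖U‖ ^ 2) * ‖y‖ ^ 2 =
        (1 - ‖U‖ ^ 2) * ((1 - ‖U‖ ^ 2) * F ^ 2 + 2 * c * F) := by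
      linear_combination -hs2 - (s + F * (1 - ‖U‖ ^ 2) + c) * hFl
    exact mul_left_cancel₀ hl.ne' key
  have hnorm2 : ‖y - F • U‖ ^ 2 = F ^ 2 := by
    rw [norm_sub_smul_sq, ← hc, hquad]; ring
  rw [← Real.sqrt_sq (norm_nonneg (y - F • U)), hnorm2, Real.sqrt_sq hFnn]

lemma zermelo_unique {E : Type*} [NormedAddCommGroup E] [InnerProductSpace ℝ E]
    (U y : E) (hU : ‖U‖ < 1) (t : ℝ) (ht : 0 < t) (h : ‖y - t • U‖ = t) :
    t = zermeloSol U y := by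
  have hl : 0 < 1 - ‖U‖ ^ 2 := by nlinarith [norm_nonneg U]
  set c : ℝ := (inner ℝ U y : ℝ) with hc
  have hquad : (1 - ‖U‖ ^ 2) * t ^ 2 + 2 * c * t = ‖y‖ ^ 2 := by
    have h2 : ‖y - t • U‖ ^ 2 = t ^ 2 := by rw [h]
    rw [norm_sub_smul_sq, ← hc] at h2
    nlinarith [h2]
  have hCS : |(inner ℝ U (y - t • U) : ℝ)| ≤ ‖U‖ * ‖y - t • U‖ := abs_real_inner_le_norm U _
  have hinner : (inner ℝ U (y - t • U) : ℝ) = c - t * ‖U‖ ^ 2 := by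
    rw [inner_sub_right, real_inner_smul_right, real_inner_self_eq_norm_sq, ← hc]
    try ring
  have hsign : 0 < (1 - ‖U‖ ^ 2) * t + c := by
    rw [hinner, h] at hCS
    have := abs_le.mp hCS
    nlinarith [norm_nonneg U]
  have hsq : ((1 - ‖U‖ ^ 2) * t + c) ^ 2 = (1 - ‖U‖ ^ 2) * ‖y‖ ^ 2 + c ^ 2 := by
    nlinarith [hquad]
  have hsqrt : Real.sqrt ((1 - ‖U‖ ^ 2) * ‖y‖ ^ 2 + c ^ 2) = (1 - ‖U‖ ^ 2) * t + c := by
    rw [← hsq, Real.sqrt_sq hsign.le]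
  unfold zermeloSol
  rw [← hc, hsqrt]
  field_simp
  ring

/-- Two-step Zermelo navigation equals one-step navigation: the Zermelo solution for
(h, V+W) is exactly the (unique positive) solution F̃ of F₁(y - F̃·W) = F̃, where
F₁ is the Zermelo solution for (h, V). -/
theorem stmt_7 {E : Type*} [NormedAddCommGroup E] [InnerProductSpace ℝ E]
    (V W : E) (hV : ‖V‖ < 1) (hVW : ‖V + W‖ < 1)
    (hF1W : zermeloSol V (-W) < 1) :
    ∀ y : E, y ≠ 0 →
      zermeloSol V (y - zermeloSol (V + W) y • W) = zermeloSol (V + W) y ∧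
      ∀ t : ℝ, 0 < t → zermeloSol V (y - t • W) = t → t = zermeloSol (V + W) y := by
  intro y hy
  set F : ℝ := zermeloSol (V + W) y with hF
  have hFpos : 0 < F := zermelo_pos (V + W) y hVW hy
  have hspec : ‖y - F • (V + W)‖ = F := zermelo_spec (V + W) y hVW
  have hrw : y - F • (V + W) = (y - F • W) - F • V := by
    rw [smul_add]; abel
  constructor
  · exact (zermelo_unique V (y - F • W) hV F hFpos (by rw [← hrw, hspec])).symm
  · intro t ht heq
    have hspecV : ‖(y - t • W) - zermeloSol V (y - t • W) • V‖ = zermeloSol V (y - t • W) :=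
      zermelo_spec V (y - t • W) hV
    rw [heq] at hspecV
    have h2 : (y - t • W) - t • V = y - t • (V + W) := by rw [smul_add]; abel
    rw [h2] at hspecV
    exact zermelo_unique (V + W) y hVW t ht hspecV
end

section
/- In the two-step Zermelo navigation, the intermediate constants satisfy η = Λ/λ, where λ = 1 - ‖V‖²_h, Λ = 1 - ‖V+W‖²_h, and η = (1 + β(W))² - α²(W), with α, β the data of the Randers solution F₁ = α + β for navigation data (h, V). -/
/-- In two-step Zermelo navigation the constants satisfy η = Λ/λ. -/
theorem stmt_8 {E : Type*} [NormedAddCommGroup E] [InnerProductSpace ℝ E]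
    (V W : E) (hV : ‖V‖ < 1) (hVW : ‖V + W‖ < 1)
    (lam Lam alphaW2 betaW eta : ℝ)
    (hlam : lam = 1 - ‖V‖ ^ 2) (hLam : Lam = 1 - ‖V + W‖ ^ 2)
    (halpha : alphaW2 = ‖W‖ ^ 2 / lam + (inner ℝ V W : ℝ) ^ 2 / lam ^ 2)
    (hbeta : betaW = -(inner ℝ V W : ℝ) / lam)
    (heta : eta = (1 + betaW) ^ 2 - alphaW2) :
    eta = Lam / lam := by
  have hl : lam ≠ 0 := by
    have : ‖V‖ ^ 2 < 1 := by
      have h0 : (0:ℝ) ≤ ‖V‖ := norm_nonneg _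
      nlinarith
    rw [hlam]; linarith
  have hexp : ‖V + W‖ ^ 2 = ‖V‖ ^ 2 + 2 * (inner ℝ V W : ℝ) + ‖W‖ ^ 2 := by
    exact norm_add_sq_real V W
  subst heta hbeta halpha hLam hlam
  rw [hexp]
  field_simp
  ring
end
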